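/- Define a sequence of polynomials A_i ∈ ℕ[x, y, z] by A_0(x, y, z) = x and A_{i+1}(x, y, z) = x + A_i(x² + 2xy + z, x, x³ + x²y). Then for every n ≥ 1 the coefficient of x^n in A_i(x, 0, 0) is eventually constant as i → ∞, and this eventual value equals the number of pairs (T0, T1) of balanced trees with exactly n leaves such that T0 ≼ T1 in the Tamari order (i.e., the number of balanced tree intervals [T0, T1] in the Tamari lattice). -/

import Mathlib

/-- Complete rooted planar binary trees. -/
inductive BTree where
  | leaf : BTree
  | node : BTree → BTree → BTree
  deriving DecidableEq

namespace BTree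

/-- The height of a tree. -/
def ht : BTree → ℕ
  | leaf => 0
  | node l r => 1 + max l.ht r.ht

/-- The imbalance value of the root of a tree (`γ`). -/
def imb : BTree → ℤ
  | leaf => 0
  | node l r => (r.ht : ℤ) - l.ht

/-- A tree is balanced if every node has imbalance value in {-1, 0, 1}. -/
def Balanced : BTree → Prop
  | leaf => True
  | node l r =>
      ((r.ht : ℤ) - l.ht = -1 ∨ (r.ht : ℤ) - l.ht = 0 ∨ (r.ht : ℤ) - l.ht = 1) ∧
      Balanced l ∧ Balanced r

/-- The subtree at a position (`false` = go left, `true` = go right). -/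
def subtreeAt : BTree → List Bool → Option BTree
  | t, [] => some t
  | leaf, _ :: _ => none
  | node l _, false :: p => subtreeAt l p
  | node _ r, true :: p => subtreeAt r p

/-- `p` is the position of an internal node of `t`. -/
def IsNodePos (t : BTree) (p : List Bool) : Prop :=
  ∃ l r, subtreeAt t p = some (node l r)

/-- Right rotation whose root `y` is at position `p`: the subtree
`(A ∧ B) ∧ C` at `p` is replaced by `A ∧ (B ∧ C)`. -/
inductive RotAt : BTree → List Bool → BTree → Prop
  | here (a b c : BTree) : RotAt (node (node a b) c) [] (node a (node b c))
  | left {l l' : BTree} (r : BTree) {p : List Bool} :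
      RotAt l p l' → RotAt (node l r) (false :: p) (node l' r)
  | right (l : BTree) {r r' : BTree} {p : List Bool} :
      RotAt r p r' → RotAt (node l r) (true :: p) (node l r')

/-- `t₁` is obtained from `t₀` by a single right rotation (`t₀ ⋌ t₁`). -/
def Rot (t₀ t₁ : BTree) : Prop := ∃ p, RotAt t₀ p t₁

/-- The Tamari order: reflexive transitive closure of right rotation. -/
def Tamari : BTree → BTree → Prop := Relation.ReflTransGen Rot

/-- Number of leaves. -/
def leaves : BTree → ℕ
  | leaf => 1
  | node l r => l.leaves + r.leaves

open MvPolynomial in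
/-- The sequence of polynomials `A_0(x, y, z) = x`,
`A_{i+1}(x, y, z) = x + A_i(x² + 2xy + z, x, x³ + x²y)`
(variables `0`, `1`, `2` are `x`, `y`, `z`). -/
noncomputable def intSeq : ℕ → MvPolynomial (Fin 3) ℕ
  | 0 => X 0
  | i + 1 =>
      X 0 + bind₁ ![X 0 ^ 2 + 2 * X 0 * X 1 + X 2, X 0, X 0 ^ 3 + X 0 ^ 2 * X 1] (intSeq i)


-- PART 1: basic lemmas

theorem one_le_leaves (t : BTree) : 1 ≤ t.leaves := by
  induction t with
  | leaf => simp [leaves]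
  | node l r ihl ihr => simp only [leaves]; omega

theorem eq_leaf_of_leaves_eq_one {t : BTree} (h : t.leaves = 1) : t = leaf := by
  cases t with
  | leaf => rfl
  | node l r =>
    have := one_le_leaves l; have := one_le_leaves r
    simp only [leaves] at h; omega

theorem ht_lt_leaves (t : BTree) : t.ht < t.leaves := by
  induction t with
  | leaf => simp [ht, leaves]
  | node l r ihl ihr =>
    simp only [ht, leaves]
    rcases Nat.le_total l.ht r.ht with h | h
    · rw [max_eq_right h]; omega
    · rw [max_eq_left h]; omega

theorem RotAt.leaves_eq {t : BTree} {p : List Bool} {t' : BTree} (h : RotAt t p t') :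
    t'.leaves = t.leaves := by
  induction h with
  | here a b c => simp only [leaves]; omega
  | left r _ ih => simp only [leaves]; omega
  | right l _ ih => simp only [leaves]; omega

theorem Rot.leaves_eq {t t' : BTree} (h : Rot t t') : t'.leaves = t.leaves := by
  obtain ⟨p, hp⟩ := h; exact hp.leaves_eq

theorem Tamari.leaves_eq {s t : BTree} (h : Tamari s t) : t.leaves = s.leaves := by
  induction h with
  | refl => rfl
  | tail _ h ih => rw [h.leaves_eq, ih]

/-- number of leaves of the left subtree -/
def lam : BTree → ℕ
  | leaf => 0
  | node l _ => l.leaves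

theorem Rot.lam_le {t t' : BTree} (h : Rot t t') : lam t' ≤ lam t := by
  obtain ⟨p, hp⟩ := h
  cases hp with
  | here a b c => simp only [lam]; have := one_le_leaves b; simp only [leaves]; omega
  | left r h => simp only [lam]; rw [h.leaves_eq]
  | right l h => simp only [lam]; omega

theorem Tamari.lam_le {s t : BTree} (h : Tamari s t) : lam t ≤ lam s := by
  induction h with
  | refl => exact le_refl _
  | tail _ h ih => exact le_trans h.lam_le ih

theorem Tamari.node_left {l l' : BTree} (h : Tamari l l') (r : BTree) :
    Tamari (node l r) (node l' r) :=
  Relation.ReflTransGen.lift (fun x => node x r)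
    (fun _ _ hr => by obtain ⟨p, hp⟩ := hr; exact ⟨false :: p, hp.left r⟩) _ _ h

theorem Tamari.node_right (l : BTree) {r r' : BTree} (h : Tamari r r') :
    Tamari (node l r) (node l r') :=
  Relation.ReflTransGen.lift (fun x => node l x)
    (fun _ _ hr => by obtain ⟨p, hp⟩ := hr; exact ⟨true :: p, hp.right l⟩) _ _ h

theorem Tamari.node_congr {l l' r r' : BTree} (hl : Tamari l l') (hr : Tamari r r') :
    Tamari (node l r) (node l' r') :=
  (hl.node_left r).trans (Tamari.node_right l' hr)

theorem tamari_decomp : ∀ {s t : BTree}, Tamari s t →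
    ∀ {l0 r0 l1 r1 : BTree}, s = node l0 r0 → t = node l1 r1 → l0.leaves = l1.leaves →
    Tamari l0 l1 ∧ Tamari r0 r1 := by
  intro s t h
  induction h using Relation.ReflTransGen.head_induction_on with
  | refl =>
    rintro l0 r0 l1 r1 rfl h2 _
    injection h2 with h3 h4
    subst h3; subst h4
    exact ⟨Relation.ReflTransGen.refl, Relation.ReflTransGen.refl⟩
  | head hstep hrest ih =>
    rintro l0 r0 l1 r1 rfl rfl hleq
    obtain ⟨p, hp⟩ := hstep
    cases hp with
    | here a b c =>
      exfalso
      have h1 : lam (node l1 r1) ≤ lam (node a (node b r0)) := Tamari.lam_le hrest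
      have := one_le_leaves b
      simp only [lam, leaves] at h1 hleq ⊢
      omega
    | left r h =>
      have h2 := h.leaves_eq
      obtain ⟨x, y⟩ := ih rfl rfl (by omega)
      exact ⟨Relation.ReflTransGen.head ⟨_, h⟩ x, y⟩
    | right l h =>
      obtain ⟨x, y⟩ := ih rfl rfl hleq
      exact ⟨x, Relation.ReflTransGen.head ⟨_, h⟩ y⟩

theorem tamari_factor : ∀ {s t : BTree}, Tamari s t →
    ∀ {l0 r0 : BTree}, s = node l0 r0 → lam t < l0.leaves →
    ∃ P Q R, Tamari l0 (node P Q) ∧ Tamari r0 R ∧ Tamari (node P (node Q R)) t := by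
  intro s t h
  induction h using Relation.ReflTransGen.head_induction_on with
  | refl =>
    rintro l0 r0 rfl hlt
    exfalso; simp only [lam] at hlt; omega
  | head hstep hrest ih =>
    rintro l0 r0 rfl hlt
    obtain ⟨p, hp⟩ := hstep
    cases hp with
    | here a b c =>
      exact ⟨a, b, r0, Relation.ReflTransGen.refl, Relation.ReflTransGen.refl, hrest⟩
    | left r h =>
      obtain ⟨P, Q, R, h1, h2, h3⟩ := ih rfl (by rw [h.leaves_eq]; exact hlt)
      exact ⟨P, Q, R, Relation.ReflTransGen.head ⟨_, h⟩ h1, h2, h3⟩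
    | right l h =>
      obtain ⟨P, Q, R, h1, h2, h3⟩ := ih rfl hlt
      exact ⟨P, Q, R, h1, Relation.ReflTransGen.head ⟨_, h⟩ h2, h3⟩
-- PART 2: spines and transport

/-- `s` is the left-spine subtree of `t` at depth `e`. -/
inductive LSp : ℕ → BTree → BTree → Prop
  | refl (t : BTree) : LSp 0 t t
  | step {e : ℕ} {s l : BTree} (r : BTree) : LSp e s l → LSp (e + 1) s (node l r)

/-- `s` is the right-spine subtree of `t` at depth `d`. -/
inductive RSp : ℕ → BTree → BTree → Prop
  | refl (t : BTree) : RSp 0 t t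
  | step {d : ℕ} {s r : BTree} (l : BTree) : RSp d s r → RSp (d + 1) s (node l r)

theorem LSp.ht_le {e : ℕ} {s t : BTree} (h : LSp e s t) : s.ht + e ≤ t.ht := by
  induction h with
  | refl t => omega
  | step r h ih =>
    rename_i e' s' l'
    have := le_max_left l'.ht r.ht
    simp only [ht]; omega

theorem RSp.ht_le {d : ℕ} {s t : BTree} (h : RSp d s t) : s.ht + d ≤ t.ht := by
  induction h with
  | refl t => omega
  | step l h ih =>
    rename_i d' s' r'
    have := le_max_right l.ht r'.ht
    simp only [ht]; omega

theorem balanced_node_iff {l r : BTree} : Balanced (node l r) ↔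
    (((r.ht : ℤ) - l.ht = -1 ∨ (r.ht : ℤ) - l.ht = 0 ∨ (r.ht : ℤ) - l.ht = 1) ∧
      Balanced l ∧ Balanced r) := Iff.rfl

theorem Balanced.left {l r : BTree} (h : Balanced (node l r)) : Balanced l :=
  (balanced_node_iff.mp h).2.1

theorem Balanced.right {l r : BTree} (h : Balanced (node l r)) : Balanced r :=
  (balanced_node_iff.mp h).2.2

theorem Balanced.imb_mem {l r : BTree} (h : Balanced (node l r)) :
    (r.ht : ℤ) - l.ht = -1 ∨ (r.ht : ℤ) - l.ht = 0 ∨ (r.ht : ℤ) - l.ht = 1 :=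
  (balanced_node_iff.mp h).1

theorem Balanced.ht_le_left {l r : BTree} (h : Balanced (node l r)) :
    ht (node l r) ≤ l.ht + 2 := by
  have h1 := h.imb_mem
  simp only [ht]
  rcases Nat.le_total l.ht r.ht with h2 | h2
  · rw [max_eq_right h2]; omega
  · rw [max_eq_left h2]; omega

theorem Balanced.ht_le_right {l r : BTree} (h : Balanced (node l r)) :
    ht (node l r) ≤ r.ht + 2 := by
  have h1 := h.imb_mem
  simp only [ht]
  rcases Nat.le_total l.ht r.ht with h2 | h2
  · rw [max_eq_right h2]; omega
  · rw [max_eq_left h2]; omega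

theorem LSp.balanced {e : ℕ} {s t : BTree} (h : LSp e s t) (hb : Balanced t) : Balanced s := by
  induction h with
  | refl t => exact hb
  | step r _ ih => exact ih hb.left

theorem RSp.balanced {d : ℕ} {s t : BTree} (h : RSp d s t) (hb : Balanced t) : Balanced s := by
  induction h with
  | refl t => exact hb
  | step l _ ih => exact ih hb.right

theorem LSp.two_le {e : ℕ} {s l r : BTree} (h : LSp e s (node l r)) (hlt : s.leaves < l.leaves) :
    2 ≤ e := by
  cases h with
  | refl => have := one_le_leaves r; simp only [leaves] at hlt; omega
  | step r h' =>
    cases h' with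
    | refl => omega
    | step r'' h'' => omega

theorem RSp.two_le {d : ℕ} {s l r : BTree} (h : RSp d s (node l r)) (hlt : s.leaves < r.leaves) :
    2 ≤ d := by
  cases h with
  | refl => have := one_le_leaves l; simp only [leaves] at hlt; omega
  | step l h' =>
    cases h' with
    | refl => omega
    | step l'' h'' => omega

theorem LSp.eq_two {s t : BTree} (h : LSp 2 s t) : ∃ b c, t = node (node s b) c := by
  cases h with
  | step r h1 =>
    cases h1 with
    | step r' h2 =>
      cases h2 with
      | refl => exact ⟨r', r, rfl⟩

theorem RSp.eq_two {s t : BTree} (h : RSp 2 s t) : ∃ a b, t = node a (node b s) := by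
  cases h with
  | step l h1 =>
    cases h1 with
    | step l' h2 =>
      cases h2 with
      | refl => exact ⟨l, l', rfl⟩

theorem rotAt_lsp {t : BTree} {p : List Bool} {u : BTree} (h : RotAt t p u) :
    ∀ {e : ℕ} {s : BTree}, LSp e s u → 1 ≤ e →
    ∃ e₂ s₂, 1 ≤ e₂ ∧ LSp e₂ s₂ t ∧ Tamari s₂ s ∧ s₂.leaves = s.leaves := by
  induction h with
  | here a b c =>
    intro e s hs he
    cases hs with
    | refl => omega
    | step r h' =>
      exact ⟨_, s, by omega, (h'.step b).step c, Relation.ReflTransGen.refl, rfl⟩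
  | left r hll ih =>
    intro e s hs he
    cases hs with
    | refl => omega
    | step r h' =>
      cases h' with
      | refl =>
        exact ⟨1, _, le_refl 1, (LSp.refl _).step r,
          Relation.ReflTransGen.single ⟨_, hll⟩, hll.leaves_eq.symm⟩
      | step r'' h'' =>
        obtain ⟨e₂, s₂, h1, h2, h3, h4⟩ := ih (h''.step r'') (by omega)
        exact ⟨e₂ + 1, s₂, by omega, h2.step r, h3, h4⟩
  | right l hrr ih =>
    intro e s hs he
    cases hs with
    | refl => omega
    | step r h' =>
      exact ⟨_, s, by omega, h'.step _, Relation.ReflTransGen.refl, rfl⟩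

theorem tamari_lsp {t t' : BTree} (h : Tamari t t') :
    ∀ {e : ℕ} {s : BTree}, LSp e s t' → 1 ≤ e →
    ∃ e₂ s₂, 1 ≤ e₂ ∧ LSp e₂ s₂ t ∧ Tamari s₂ s ∧ s₂.leaves = s.leaves := by
  induction h using Relation.ReflTransGen.head_induction_on with
  | refl =>
    intro e s hs he
    exact ⟨e, s, he, hs, Relation.ReflTransGen.refl, rfl⟩
  | head hstep hrest ih =>
    intro e s hs he
    obtain ⟨e₂, s₂, h1, h2, h3, h4⟩ := ih hs he
    obtain ⟨p, hp⟩ := hstep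
    obtain ⟨e₃, s₃, g1, g2, g3, g4⟩ := rotAt_lsp hp h2 h1
    exact ⟨e₃, s₃, g1, g2, g3.trans h3, by omega⟩

theorem rotAt_rsp {t : BTree} {p : List Bool} {u : BTree} (h : RotAt t p u) :
    ∀ {d : ℕ} {s : BTree}, RSp d s t → 1 ≤ d →
    ∃ d' s', 1 ≤ d' ∧ RSp d' s' u ∧ Tamari s s' ∧ s'.leaves = s.leaves := by
  induction h with
  | here a b c =>
    intro d s hs hd
    cases hs with
    | refl => omega
    | step l h' =>
      exact ⟨_, s, by omega, (h'.step b).step a, Relation.ReflTransGen.refl, rfl⟩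
  | left r hll ih =>
    intro d s hs hd
    cases hs with
    | refl => omega
    | step l h' =>
      exact ⟨_, s, by omega, h'.step _, Relation.ReflTransGen.refl, rfl⟩
  | right l hrr ih =>
    intro d s hs hd
    cases hs with
    | refl => omega
    | step l h' =>
      cases h' with
      | refl =>
        exact ⟨1, _, le_refl 1, (RSp.refl _).step l,
          Relation.ReflTransGen.single ⟨_, hrr⟩, hrr.leaves_eq⟩
      | step l'' h'' =>
        obtain ⟨d₂, s₂, h1, h2, h3, h4⟩ := ih (h''.step l'') (by omega)
        exact ⟨d₂ + 1, s₂, by omega, h2.step l, h3, h4⟩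

theorem tamari_rsp {t t' : BTree} (h : Tamari t t') :
    ∀ {d : ℕ} {s : BTree}, RSp d s t → 1 ≤ d →
    ∃ d' s', 1 ≤ d' ∧ RSp d' s' t' ∧ Tamari s s' ∧ s'.leaves = s.leaves := by
  induction h with
  | refl =>
    intro d s hs hd
    exact ⟨d, s, hd, hs, Relation.ReflTransGen.refl, rfl⟩
  | tail hrest hstep ih =>
    intro d s hs hd
    obtain ⟨d₂, s₂, h1, h2, h3, h4⟩ := ih hs hd
    obtain ⟨p, hp⟩ := hstep
    obtain ⟨d₃, s₃, g1, g2, g3, g4⟩ := rotAt_rsp hp h2 h1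
    exact ⟨d₃, s₃, g1, g2, h3.trans g3, by omega⟩
-- PART 3: Good pairs

/-- Inductive characterization of balanced Tamari intervals. -/
inductive Good : BTree → BTree → Prop
  | leaf : Good leaf leaf
  | node {l0 r0 l1 r1 : BTree} : Good l0 l1 → Good r0 r1 →
      ((r0.ht : ℤ) - l0.ht = -1 ∨ (r0.ht : ℤ) - l0.ht = 0 ∨ (r0.ht : ℤ) - l0.ht = 1) →
      Good (node l0 r0) (node l1 r1)
  | rot {a0 b0 c0 a1 b1 c1 : BTree} : Good a0 a1 → Good b0 b1 → Good c0 c1 →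
      a0.ht = c0.ht → (b0.ht = a0.ht ∨ b0.ht + 1 = a0.ht) →
      Good (node (node a0 b0) c0) (node a1 (node b1 c1))

theorem Good.ht_eq : ∀ {t0 t1 : BTree}, Good t0 t1 → t0.ht = t1.ht := by
  intro t0 t1 g
  induction g with
  | leaf => rfl
  | node gl gr himb ihl ihr => simp only [ht, ihl, ihr]
  | rot ga gb gc hac hb iha ihb ihc =>
    rename_i a0 b0 c0 a1 b1 c1
    have hba : b0.ht ≤ a0.ht := by omega
    simp only [ht, ← iha, ← ihb, ← ihc]
    rw [max_eq_left hba, ← hac, max_eq_right hba,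
      max_eq_left (show a0.ht ≤ 1 + a0.ht by omega),
      max_eq_right (show a0.ht ≤ 1 + a0.ht by omega)]

theorem Good.leaves_eq : ∀ {t0 t1 : BTree}, Good t0 t1 → t0.leaves = t1.leaves := by
  intro t0 t1 g
  induction g with
  | leaf => rfl
  | node gl gr himb ihl ihr => simp only [leaves]; omega
  | rot ga gb gc hac hb iha ihb ihc => simp only [leaves]; omega

theorem Good.balanced : ∀ {t0 t1 : BTree}, Good t0 t1 → Balanced t0 ∧ Balanced t1 := by
  intro t0 t1 g
  induction g with
  | leaf => exact ⟨trivial, trivial⟩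
  | node gl gr himb ihl ihr =>
    refine ⟨balanced_node_iff.mpr ⟨himb, ihl.1, ihr.1⟩,
      balanced_node_iff.mpr ⟨?_, ihl.2, ihr.2⟩⟩
    rw [← gl.ht_eq, ← gr.ht_eq]; exact himb
  | rot ga gb gc hac hb iha ihb ihc =>
    rename_i a0 b0 c0 a1 b1 c1
    have e1 := ga.ht_eq
    have e2 := gb.ht_eq
    have e3 := gc.ht_eq
    have hba : b0.ht ≤ a0.ht := by omega
    have hba' : b1.ht ≤ c1.ht := by omega
    constructor
    · refine balanced_node_iff.mpr ⟨?_, balanced_node_iff.mpr ⟨?_, iha.1, ihb.1⟩, ihc.1⟩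
      · simp only [ht, max_eq_left hba]; omega
      · omega
    · refine balanced_node_iff.mpr ⟨?_, iha.2, balanced_node_iff.mpr ⟨?_, ihb.2, ihc.2⟩⟩
      · simp only [ht, max_eq_right hba']; omega
      · omega

theorem Good.tamari : ∀ {t0 t1 : BTree}, Good t0 t1 → Tamari t0 t1 := by
  intro t0 t1 g
  induction g with
  | leaf => exact Relation.ReflTransGen.refl
  | node gl gr himb ihl ihr => exact Tamari.node_congr ihl ihr
  | rot ga gb gc hac hb iha ihb ihc =>
    refine Relation.ReflTransGen.tail
      (Tamari.node_congr (Tamari.node_congr iha ihb) ihc) ⟨[], RotAt.here _ _ _⟩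
-- PART 4: structure theorem

theorem good_aux : ∀ n : ℕ, ∀ t0 t1 : BTree, t0.leaves ≤ n →
    Balanced t0 → Balanced t1 → Tamari t0 t1 → Good t0 t1 := by
  intro n
  induction n with
  | zero => intro t0 t1 hle; exact absurd hle (by have := one_le_leaves t0; omega)
  | succ n ih =>
    intro t0 t1 hle h0 h1 h
    cases t0 with
    | leaf =>
      have h2 : t1.leaves = 1 := by
        have := h.leaves_eq; simpa [leaves] using this
      rw [eq_leaf_of_leaves_eq_one h2]
      exact Good.leaf
    | node l0 r0 =>
      cases t1 with
      | leaf =>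
        exfalso
        have h2 := h.leaves_eq
        have := one_le_leaves l0; have := one_le_leaves r0
        simp only [leaves] at h2; omega
      | node l1 r1 =>
        have hlv := h.leaves_eq
        simp only [leaves] at hlv hle
        have i1 := one_le_leaves l0
        have i2 := one_le_leaves r0
        have i3 := one_le_leaves l1
        have i4 := one_le_leaves r1
        rcases lt_trichotomy l1.leaves l0.leaves with hlt | heq | hgt
        · -- the rotation case
          obtain ⟨e, A0', he1, hA0sp, hA0tam, hA0lv⟩ :=
            tamari_lsp h ((LSp.refl l1).step r1) (by omega)
          have he2 : 2 ≤ e := hA0sp.two_le (by omega)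
          obtain ⟨d, C1', hd1, hC1sp, hC1tam, hC1lv⟩ :=
            tamari_rsp h ((RSp.refl r0).step l0) (by omega)
          have hd2 : 2 ≤ d := hC1sp.two_le (by omega)
          have gA : Good A0' l1 := ih A0' l1 (by omega) (hA0sp.balanced h0) h1.left hA0tam
          have gC : Good r0 C1' := ih r0 C1' (by omega) h0.right (hC1sp.balanced h1) hC1tam
          have e1 := gA.ht_eq
          have e2 := gC.ht_eq
          have e3 := hA0sp.ht_le
          have e4 := hC1sp.ht_le
          have e5 := h1.ht_le_left
          have e6 := h0.ht_le_right
          have he : e = 2 := by omega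
          have hd : d = 2 := by omega
          subst he; subst hd
          obtain ⟨b0', c0', hsh0⟩ := hA0sp.eq_two
          injection hsh0 with hL0 hR0
          subst hL0; subst hR0
          obtain ⟨a1', b1', hsh1⟩ := hC1sp.eq_two
          injection hsh1 with hL1 hR1
          subst hL1; subst hR1
          -- now t0 = node (node A0' b0') r0, t1 = node l1 (node b1' C1')
          have iA := one_le_leaves A0'
          have iB := one_le_leaves b0'
          have iB1 := one_le_leaves b1'
          have iC1 := one_le_leaves C1'
          simp only [leaves] at hlv hle hlt
          obtain ⟨P, Q, R, hPQ, hRR, hM⟩ := tamari_factor h rfl (by simp only [lam, leaves]; omega)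
          have w1 : P.leaves ≤ A0'.leaves := by
            have := hPQ.lam_le; simp only [lam] at this; omega
          have w2 : l1.leaves ≤ P.leaves := by
            have := hM.lam_le; simp only [lam] at this; omega
          have hPl : P.leaves = A0'.leaves := by omega
          obtain ⟨tAP, tBQ⟩ := tamari_decomp hPQ rfl rfl hPl.symm
          obtain ⟨tPl1, tQR⟩ := tamari_decomp hM rfl rfl (by omega)
          have q1 := tBQ.leaves_eq
          have hQb : Q.leaves = b1'.leaves := by omega
          obtain ⟨tQB, tRC⟩ := tamari_decomp tQR rfl rfl hQb
          have gB : Good b0' b1' := ih b0' b1' (by omega) h0.left.right h1.right.left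
            (tBQ.trans tQB)
          have eB := gB.ht_eq
          have m1 := h0.imb_mem
          have m2 := h0.left.imb_mem
          have m3 := h1.imb_mem
          have m4 := h1.right.imb_mem
          simp only [ht] at m1 m3
          have key : A0'.ht = r0.ht ∧ (b0'.ht = A0'.ht ∨ b0'.ht + 1 = A0'.ht) := by
            have u1 := le_max_left A0'.ht b0'.ht
            have u2 := le_max_right A0'.ht b0'.ht
            have v1 := le_max_left b1'.ht C1'.ht
            have v2 := le_max_right b1'.ht C1'.ht
            rcases max_choice A0'.ht b0'.ht with hu | hu <;>
              rcases max_choice b1'.ht C1'.ht with hv | hv <;>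
              rw [hu] at m1 u1 u2 <;> rw [hv] at m3 v1 v2 <;> omega
          exact Good.rot gA gB gC key.1 key.2
        · obtain ⟨htl, htr⟩ := tamari_decomp h rfl rfl heq.symm
          exact Good.node (ih l0 l1 (by omega) h0.left h1.left htl)
            (ih r0 r1 (by omega) h0.right h1.right htr) h0.imb_mem
        · exfalso
          have := h.lam_le
          simp only [lam] at this
          omega

theorem good_iff {t0 t1 : BTree} :
    Good t0 t1 ↔ Balanced t0 ∧ Balanced t1 ∧ Tamari t0 t1 := by
  constructor
  · intro g; exact ⟨g.balanced.1, g.balanced.2, g.tamari⟩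
  · rintro ⟨h0, h1, h⟩; exact good_aux t0.leaves t0 t1 le_rfl h0 h1 h
-- PART 5: derivations

/-- Derivation trees for the synchronous grammar. -/
inductive D where
  | xb : D
  | yb : D
  | zb : D
  | n2 : D → D → D
  | nl : D → D → D
  | nr : D → D → D
  | zn : D → D
  | up : D → D
  | t3 : D → D → D → D
  | t2 : D → D → D → D
  deriving DecidableEq

namespace D

/-- number of `x`-buds -/
def cnt : D → ℕ
  | xb => 1
  | yb => 0
  | zb => 0
  | n2 a b => a.cnt + b.cnt
  | nl a b => a.cnt + b.cnt
  | nr a b => a.cnt + b.cnt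
  | zn a => a.cnt
  | up a => a.cnt
  | t3 a b c => a.cnt + b.cnt + c.cnt
  | t2 a b c => a.cnt + b.cnt + c.cnt

/-- complete: no `y`- or `z`-buds remain -/
def ok : D → Bool
  | xb => true
  | yb => false
  | zb => false
  | n2 a b => a.ok && b.ok
  | nl a b => a.ok && b.ok
  | nr a b => a.ok && b.ok
  | zn a => a.ok
  | up a => a.ok
  | t3 a b c => a.ok && b.ok && c.ok
  | t2 a b c => a.ok && b.ok && c.ok

/-- lower tree of the pair -/
def tr0 : D → BTree
  | xb => .leaf
  | yb => .leaf
  | zb => .leaf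
  | n2 a b => .node a.tr0 b.tr0
  | nl a b => .node a.tr0 b.tr0
  | nr a b => .node a.tr0 b.tr0
  | zn a => a.tr0
  | up a => a.tr0
  | t3 a b c => .node (.node a.tr0 b.tr0) c.tr0
  | t2 a b c => .node (.node a.tr0 b.tr0) c.tr0

/-- upper tree of the pair -/
def tr1 : D → BTree
  | xb => .leaf
  | yb => .leaf
  | zb => .leaf
  | n2 a b => .node a.tr1 b.tr1
  | nl a b => .node a.tr1 b.tr1
  | nr a b => .node a.tr1 b.tr1
  | zn a => a.tr1
  | up a => a.tr1
  | t3 a b c => .node a.tr1 (.node b.tr1 c.tr1)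
  | t2 a b c => .node a.tr1 (.node b.tr1 c.tr1)

open MvPolynomial in
/-- the monomial weight of a derivation -/
noncomputable def w : D → MvPolynomial (Fin 3) ℕ
  | xb => X 0
  | yb => X 1
  | zb => X 2
  | n2 a b => a.w * b.w
  | nl a b => a.w * b.w
  | nr a b => a.w * b.w
  | zn a => a.w
  | up a => a.w
  | t3 a b c => a.w * b.w * c.w
  | t2 a b c => a.w * b.w * c.w

end D

open D in
/-- the triple of finsets of `x`-, `y`-, `z`- derivations with `k` steps -/
def lev : ℕ → Finset D × Finset D × Finset D
  | 0 => ({D.xb}, {D.yb}, {D.zb})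
  | k + 1 =>
      ((((lev k).1 ×ˢ (lev k).1).image fun p => D.n2 p.1 p.2) ∪
        (((lev k).1 ×ˢ (lev k).2.1).image fun p => D.nl p.1 p.2) ∪
        (((lev k).2.1 ×ˢ (lev k).1).image fun p => D.nr p.1 p.2) ∪
        ((lev k).2.2.image D.zn),
       (lev k).1.image D.up,
       (((lev k).1 ×ˢ (lev k).1 ×ˢ (lev k).1).image fun p => D.t3 p.1 p.2.1 p.2.2) ∪
        (((lev k).1 ×ˢ (lev k).2.1 ×ˢ (lev k).1).image fun p => D.t2 p.1 p.2.1 p.2.2))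

def LX (k : ℕ) : Finset D := (lev k).1
def LY (k : ℕ) : Finset D := (lev k).2.1
def LZ (k : ℕ) : Finset D := (lev k).2.2

theorem LX_zero : LX 0 = {D.xb} := rfl
theorem LY_zero : LY 0 = {D.yb} := rfl
theorem LZ_zero : LZ 0 = {D.zb} := rfl

theorem LX_succ (k : ℕ) : LX (k + 1) =
    ((LX k ×ˢ LX k).image fun p => D.n2 p.1 p.2) ∪
      ((LX k ×ˢ LY k).image fun p => D.nl p.1 p.2) ∪
      ((LY k ×ˢ LX k).image fun p => D.nr p.1 p.2) ∪
      ((LZ k).image D.zn) := rfl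

theorem LY_succ (k : ℕ) : LY (k + 1) = (LX k).image D.up := rfl

theorem LZ_succ (k : ℕ) : LZ (k + 1) =
    ((LX k ×ˢ LX k ×ˢ LX k).image fun p => D.t3 p.1 p.2.1 p.2.2) ∪
      ((LX k ×ˢ LY k ×ˢ LX k).image fun p => D.t2 p.1 p.2.1 p.2.2) := rfl

theorem mem_LX_succ {k : ℕ} {d : D} : d ∈ LX (k + 1) ↔
    (∃ a b, a ∈ LX k ∧ b ∈ LX k ∧ d = D.n2 a b) ∨
    (∃ a b, a ∈ LX k ∧ b ∈ LY k ∧ d = D.nl a b) ∨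
    (∃ a b, a ∈ LY k ∧ b ∈ LX k ∧ d = D.nr a b) ∨
    (∃ z, z ∈ LZ k ∧ d = D.zn z) := by
  rw [LX_succ]
  simp only [Finset.mem_union, Finset.mem_image, Finset.mem_product, Prod.exists]
  constructor
  · rintro (((⟨a, b, ⟨ha, hb⟩, rfl⟩ | ⟨a, b, ⟨ha, hb⟩, rfl⟩) | ⟨a, b, ⟨ha, hb⟩, rfl⟩) |
      ⟨z, hz, rfl⟩)
    · exact Or.inl ⟨a, b, ha, hb, rfl⟩
    · exact Or.inr (Or.inl ⟨a, b, ha, hb, rfl⟩)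
    · exact Or.inr (Or.inr (Or.inl ⟨a, b, ha, hb, rfl⟩))
    · exact Or.inr (Or.inr (Or.inr ⟨z, hz, rfl⟩))
  · rintro (⟨a, b, ha, hb, rfl⟩ | ⟨a, b, ha, hb, rfl⟩ | ⟨a, b, ha, hb, rfl⟩ | ⟨z, hz, rfl⟩)
    · exact Or.inl (Or.inl (Or.inl ⟨a, b, ⟨ha, hb⟩, rfl⟩))
    · exact Or.inl (Or.inl (Or.inr ⟨a, b, ⟨ha, hb⟩, rfl⟩))
    · exact Or.inl (Or.inr ⟨a, b, ⟨ha, hb⟩, rfl⟩)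
    · exact Or.inr ⟨z, hz, rfl⟩

theorem mem_LY_succ {k : ℕ} {d : D} : d ∈ LY (k + 1) ↔ ∃ a, a ∈ LX k ∧ d = D.up a := by
  rw [LY_succ]
  simp only [Finset.mem_image]
  constructor
  · rintro ⟨a, ha, rfl⟩; exact ⟨a, ha, rfl⟩
  · rintro ⟨a, ha, rfl⟩; exact ⟨a, ha, rfl⟩

theorem mem_LZ_succ {k : ℕ} {d : D} : d ∈ LZ (k + 1) ↔
    (∃ a b c, a ∈ LX k ∧ b ∈ LX k ∧ c ∈ LX k ∧ d = D.t3 a b c) ∨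
    (∃ a b c, a ∈ LX k ∧ b ∈ LY k ∧ c ∈ LX k ∧ d = D.t2 a b c) := by
  rw [LZ_succ]
  simp only [Finset.mem_union, Finset.mem_image, Finset.mem_product, Prod.exists]
  constructor
  · rintro (⟨a, b, c, ⟨ha, hb, hc⟩, rfl⟩ | ⟨a, b, c, ⟨ha, hb, hc⟩, rfl⟩)
    · exact Or.inl ⟨a, b, c, ha, hb, hc, rfl⟩
    · exact Or.inr ⟨a, b, c, ha, hb, hc, rfl⟩
  · rintro (⟨a, b, c, ha, hb, hc, rfl⟩ | ⟨a, b, c, ha, hb, hc, rfl⟩)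
    · exact Or.inl ⟨a, b, c, ⟨ha, hb, hc⟩, rfl⟩
    · exact Or.inr ⟨a, b, c, ⟨ha, hb, hc⟩, rfl⟩
-- PART 6: generating polynomials

open MvPolynomial

noncomputable def WS (s : Finset D) : MvPolynomial (Fin 3) ℕ := ∑ d ∈ s, d.w

theorem WS_image₂ {f : D → D → D} (hf : ∀ a b a' b', f a b = f a' b' → a = a' ∧ b = b')
    (hw : ∀ a b, (f a b).w = a.w * b.w) (s t : Finset D) :
    WS ((s ×ˢ t).image fun p => f p.1 p.2) = WS s * WS t := by
  rw [WS, Finset.sum_image (by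
    rintro ⟨a, b⟩ _ ⟨a', b'⟩ _ h
    obtain ⟨h1, h2⟩ := hf a b a' b' h
    simp [h1, h2])]
  rw [Finset.sum_product, WS, WS, Finset.sum_mul_sum]
  exact Finset.sum_congr rfl fun a _ => Finset.sum_congr rfl fun b _ => hw a b

theorem WS_image₃ {f : D → D → D → D}
    (hf : ∀ a b c a' b' c', f a b c = f a' b' c' → a = a' ∧ b = b' ∧ c = c')
    (hw : ∀ a b c, (f a b c).w = a.w * b.w * c.w) (s t u : Finset D) :
    WS ((s ×ˢ t ×ˢ u).image fun p => f p.1 p.2.1 p.2.2) = WS s * WS t * WS u := by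
  rw [WS, Finset.sum_image (by
    rintro ⟨a, b, c⟩ _ ⟨a', b', c'⟩ _ h
    obtain ⟨h1, h2, h3⟩ := hf a b c a' b' c' h
    simp [h1, h2, h3])]
  rw [Finset.sum_product]
  have inner : ∀ a : D, ∑ q ∈ t ×ˢ u, (f a q.1 q.2).w = a.w * (WS t * WS u) := by
    intro a
    rw [Finset.sum_product, WS, WS, Finset.sum_mul_sum, Finset.mul_sum]
    refine Finset.sum_congr rfl fun b _ => ?_
    rw [Finset.mul_sum]
    refine Finset.sum_congr rfl fun c _ => ?_
    rw [hw, mul_assoc]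
  rw [Finset.sum_congr rfl fun a _ => inner a, ← Finset.sum_mul, ← WS, ← mul_assoc]

theorem WS_image₁ {f : D → D} (hf : ∀ a a', f a = f a' → a = a')
    (hw : ∀ a, (f a).w = a.w) (s : Finset D) : WS (s.image f) = WS s := by
  rw [WS, Finset.sum_image fun a _ a' _ h => hf a a' h]
  exact Finset.sum_congr rfl fun a _ => hw a

theorem disj_img {α β : Type} {s : Finset α} {t : Finset β} {f : α → D} {g : β → D}
    (h : ∀ a b, f a ≠ g b) : Disjoint (s.image f) (t.image g) := by
  rw [Finset.disjoint_left]
  rintro x hx hy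
  simp only [Finset.mem_image] at hx hy
  obtain ⟨a, _, rfl⟩ := hx
  obtain ⟨b, _, hb⟩ := hy
  exact h a b hb.symm

theorem WS_LX_succ (k : ℕ) : WS (LX (k + 1)) =
    WS (LX k) * WS (LX k) + WS (LX k) * WS (LY k) + WS (LY k) * WS (LX k) + WS (LZ k) := by
  rw [LX_succ, WS]
  rw [Finset.sum_union (by
    refine Finset.disjoint_union_left.mpr ⟨Finset.disjoint_union_left.mpr ⟨?_, ?_⟩, ?_⟩ <;>
      exact disj_img fun a b h => D.noConfusion h)]
  rw [Finset.sum_union (by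
    refine Finset.disjoint_union_left.mpr ⟨?_, ?_⟩ <;>
      exact disj_img fun a b h => D.noConfusion h)]
  rw [Finset.sum_union (disj_img fun a b h => D.noConfusion h)]
  rw [← WS, ← WS, ← WS, ← WS]
  rw [WS_image₂ (f := D.n2) (fun a b a' b' h => by injection h with h1 h2; exact ⟨h1, h2⟩)
      (fun a b => rfl),
    WS_image₂ (f := D.nl) (fun a b a' b' h => by injection h with h1 h2; exact ⟨h1, h2⟩)
      (fun a b => rfl),
    WS_image₂ (f := D.nr) (fun a b a' b' h => by injection h with h1 h2; exact ⟨h1, h2⟩)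
      (fun a b => rfl),
    WS_image₁ (f := D.zn) (fun a a' h => by injection h) (fun a => rfl)]

theorem WS_LY_succ (k : ℕ) : WS (LY (k + 1)) = WS (LX k) := by
  rw [LY_succ, WS_image₁ (f := D.up) (fun a a' h => by injection h) (fun a => rfl)]

theorem WS_LZ_succ (k : ℕ) : WS (LZ (k + 1)) =
    WS (LX k) * WS (LX k) * WS (LX k) + WS (LX k) * WS (LY k) * WS (LX k) := by
  rw [LZ_succ, WS]
  rw [Finset.sum_union (disj_img fun a b h => D.noConfusion h)]
  rw [← WS, ← WS]
  have inj3 : ∀ a b c a' b' c' : D, D.t3 a b c = D.t3 a' b' c' → a = a' ∧ b = b' ∧ c = c' := by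
    intro a b c a' b' c' h
    injection h with h1 h2 h3
    exact ⟨h1, h2, h3⟩
  have inj2 : ∀ a b c a' b' c' : D, D.t2 a b c = D.t2 a' b' c' → a = a' ∧ b = b' ∧ c = c' := by
    intro a b c a' b' c' h
    injection h with h1 h2 h3
    exact ⟨h1, h2, h3⟩
  rw [WS_image₃ (f := D.t3) inj3 (fun a b c => rfl),
    WS_image₃ (f := D.t2) inj2 (fun a b c => rfl)]

noncomputable def σv : Fin 3 → MvPolynomial (Fin 3) ℕ :=
  ![X 0 ^ 2 + 2 * X 0 * X 1 + X 2, X 0, X 0 ^ 3 + X 0 ^ 2 * X 1]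

theorem WS_singleton (d : D) : WS {d} = d.w := Finset.sum_singleton _ _

theorem bind_lev : ∀ k, bind₁ σv (WS (LX k)) = WS (LX (k + 1)) ∧
    bind₁ σv (WS (LY k)) = WS (LY (k + 1)) ∧ bind₁ σv (WS (LZ k)) = WS (LZ (k + 1)) := by
  intro k
  induction k with
  | zero =>
    refine ⟨?_, ?_, ?_⟩
    · rw [LX_zero, WS_singleton, show D.xb.w = X 0 from rfl, bind₁_X_right,
        WS_LX_succ, LX_zero, LY_zero, LZ_zero, WS_singleton, WS_singleton, WS_singleton]
      show σv 0 = _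
      rw [show σv 0 = X 0 ^ 2 + 2 * X 0 * X 1 + X 2 from rfl,
        show D.xb.w = X 0 from rfl, show D.yb.w = X 1 from rfl, show D.zb.w = X 2 from rfl]
      ring
    · rw [LY_zero, WS_singleton, show D.yb.w = X 1 from rfl, bind₁_X_right,
        WS_LY_succ, LX_zero, WS_singleton]
      rfl
    · rw [LZ_zero, WS_singleton, show D.zb.w = X 2 from rfl, bind₁_X_right,
        WS_LZ_succ, LX_zero, LY_zero, WS_singleton, WS_singleton]
      show σv 2 = _
      rw [show σv 2 = X 0 ^ 3 + X 0 ^ 2 * X 1 from rfl,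
        show D.xb.w = X 0 from rfl, show D.yb.w = X 1 from rfl]
      ring
  | succ k ih =>
    obtain ⟨ih1, ih2, ih3⟩ := ih
    refine ⟨?_, ?_, ?_⟩
    · rw [WS_LX_succ k, WS_LX_succ (k + 1)]
      simp only [map_add, map_mul, ih1, ih2, ih3]
    · rw [WS_LY_succ k, WS_LY_succ (k + 1)]
      exact ih1
    · rw [WS_LZ_succ k, WS_LZ_succ (k + 1)]
      simp only [map_add, map_mul, ih1, ih2, ih3]

theorem intSeq_eq (i : ℕ) : intSeq i = ∑ k ∈ Finset.range (i + 1), WS (LX k) := by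
  induction i with
  | zero =>
    rw [Finset.sum_range_one, LX_zero, WS_singleton]
    rfl
  | succ i ih =>
    have : intSeq (i + 1) = X 0 + bind₁ σv (intSeq i) := rfl
    rw [this, ih, map_sum]
    rw [Finset.sum_congr rfl fun k _ => (bind_lev k).1]
    rw [Finset.sum_range_succ' (fun k => WS (LX k)) (i + 1)]
    rw [add_comm, LX_zero, WS_singleton]
    rfl
-- PART 7: levels are good pairs

theorem ht_node_left {l r : BTree} (h : r.ht ≤ l.ht) : (node l r).ht = 1 + l.ht := by
  simp [ht, max_eq_left h]

theorem ht_node_right {l r : BTree} (h : l.ht ≤ r.ht) : (node l r).ht = 1 + r.ht := by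
  simp [ht, max_eq_right h]

theorem lev_spec : ∀ k : ℕ,
    (∀ d ∈ LX k, d.ok = true → Good d.tr0 d.tr1 ∧ d.tr0.ht = k ∧ d.tr1.ht = k ∧
      d.tr0.leaves = d.cnt ∧ d.tr1.leaves = d.cnt) ∧
    (∀ d ∈ LY k, d.ok = true → Good d.tr0 d.tr1 ∧ d.tr0.ht + 1 = k ∧ d.tr1.ht + 1 = k ∧
      d.tr0.leaves = d.cnt ∧ d.tr1.leaves = d.cnt) ∧
    (∀ d ∈ LZ k, d.ok = true → Good d.tr0 d.tr1 ∧ d.tr0.ht = k + 1 ∧ d.tr1.ht = k + 1 ∧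
      d.tr0.leaves = d.cnt ∧ d.tr1.leaves = d.cnt) := by
  intro k
  induction k with
  | zero =>
    refine ⟨?_, ?_, ?_⟩
    · intro d hd _
      rw [LX_zero, Finset.mem_singleton] at hd
      subst hd
      exact ⟨Good.leaf, rfl, rfl, rfl, rfl⟩
    · intro d hd hok
      rw [LY_zero, Finset.mem_singleton] at hd
      subst hd
      exact absurd hok (by simp [D.ok])
    · intro d hd hok
      rw [LZ_zero, Finset.mem_singleton] at hd
      subst hd
      exact absurd hok (by simp [D.ok])
  | succ k ih =>
    obtain ⟨ihX, ihY, ihZ⟩ := ih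
    refine ⟨?_, ?_, ?_⟩
    · intro d hd hok
      rcases mem_LX_succ.mp hd with ⟨a, b, ha, hb, rfl⟩ | ⟨a, b, ha, hb, rfl⟩ |
        ⟨a, b, ha, hb, rfl⟩ | ⟨z, hz, rfl⟩
      · rw [show (D.n2 a b).ok = (a.ok && b.ok) from rfl, Bool.and_eq_true] at hok
        obtain ⟨ga, ka0, ka1, la0, la1⟩ := ihX a ha hok.1
        obtain ⟨gb, kb0, kb1, lb0, lb1⟩ := ihX b hb hok.2
        have e0 : (D.n2 a b).tr0 = node a.tr0 b.tr0 := rfl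
        have e1 : (D.n2 a b).tr1 = node a.tr1 b.tr1 := rfl
        refine ⟨Good.node ga gb (Or.inr (Or.inl (by omega))), ?_, ?_, ?_, ?_⟩
        · rw [e0, ht_node_left (by omega)]; omega
        · rw [e1, ht_node_left (by omega)]; omega
        · rw [e0]; show a.tr0.leaves + b.tr0.leaves = a.cnt + b.cnt; omega
        · rw [e1]; show a.tr1.leaves + b.tr1.leaves = a.cnt + b.cnt; omega
      · rw [show (D.nl a b).ok = (a.ok && b.ok) from rfl, Bool.and_eq_true] at hok
        obtain ⟨ga, ka0, ka1, la0, la1⟩ := ihX a ha hok.1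
        obtain ⟨gb, kb0, kb1, lb0, lb1⟩ := ihY b hb hok.2
        have e0 : (D.nl a b).tr0 = node a.tr0 b.tr0 := rfl
        have e1 : (D.nl a b).tr1 = node a.tr1 b.tr1 := rfl
        refine ⟨Good.node ga gb (Or.inl (by omega)), ?_, ?_, ?_, ?_⟩
        · rw [e0, ht_node_left (by omega)]; omega
        · rw [e1, ht_node_left (by omega)]; omega
        · rw [e0]; show a.tr0.leaves + b.tr0.leaves = a.cnt + b.cnt; omega
        · rw [e1]; show a.tr1.leaves + b.tr1.leaves = a.cnt + b.cnt; omega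
      · rw [show (D.nr a b).ok = (a.ok && b.ok) from rfl, Bool.and_eq_true] at hok
        obtain ⟨ga, ka0, ka1, la0, la1⟩ := ihY a ha hok.1
        obtain ⟨gb, kb0, kb1, lb0, lb1⟩ := ihX b hb hok.2
        have e0 : (D.nr a b).tr0 = node a.tr0 b.tr0 := rfl
        have e1 : (D.nr a b).tr1 = node a.tr1 b.tr1 := rfl
        refine ⟨Good.node ga gb (Or.inr (Or.inr (by omega))), ?_, ?_, ?_, ?_⟩
        · rw [e0, ht_node_right (by omega)]; omega
        · rw [e1, ht_node_right (by omega)]; omega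
        · rw [e0]; show a.tr0.leaves + b.tr0.leaves = a.cnt + b.cnt; omega
        · rw [e1]; show a.tr1.leaves + b.tr1.leaves = a.cnt + b.cnt; omega
      · obtain ⟨gz, kz0, kz1, lz0, lz1⟩ := ihZ z hz hok
        exact ⟨gz, kz0, kz1, lz0, lz1⟩
    · intro d hd hok
      obtain ⟨a, ha, rfl⟩ := mem_LY_succ.mp hd
      obtain ⟨ga, ka0, ka1, la0, la1⟩ := ihX a ha hok
      refine ⟨ga, ?_, ?_, la0, la1⟩
      · show a.tr0.ht + 1 = k + 1; omega
      · show a.tr1.ht + 1 = k + 1; omega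
    · intro d hd hok
      rcases mem_LZ_succ.mp hd with ⟨a, b, c, ha, hb, hc, rfl⟩ | ⟨a, b, c, ha, hb, hc, rfl⟩
      · rw [show (D.t3 a b c).ok = (a.ok && b.ok && c.ok) from rfl, Bool.and_eq_true,
          Bool.and_eq_true] at hok
        obtain ⟨ga, ka0, ka1, la0, la1⟩ := ihX a ha hok.1.1
        obtain ⟨gb, kb0, kb1, lb0, lb1⟩ := ihX b hb hok.1.2
        obtain ⟨gc, kc0, kc1, lc0, lc1⟩ := ihX c hc hok.2
        have e0 : (D.t3 a b c).tr0 = node (node a.tr0 b.tr0) c.tr0 := rfl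
        have e1 : (D.t3 a b c).tr1 = node a.tr1 (node b.tr1 c.tr1) := rfl
        have f0 : (node a.tr0 b.tr0 : BTree).ht = 1 + a.tr0.ht := ht_node_left (by omega)
        have f1 : (node b.tr1 c.tr1 : BTree).ht = 1 + b.tr1.ht := ht_node_left (by omega)
        refine ⟨Good.rot ga gb gc (by omega) (Or.inl (by omega)), ?_, ?_, ?_, ?_⟩
        · rw [e0, ht_node_left (by rw [f0]; omega), f0]; omega
        · rw [e1, ht_node_right (by rw [f1]; omega), f1]; omega
        · rw [e0]
          show a.tr0.leaves + b.tr0.leaves + c.tr0.leaves = a.cnt + b.cnt + c.cnt; omega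
        · rw [e1]
          show a.tr1.leaves + (b.tr1.leaves + c.tr1.leaves) = a.cnt + b.cnt + c.cnt; omega
      · rw [show (D.t2 a b c).ok = (a.ok && b.ok && c.ok) from rfl, Bool.and_eq_true,
          Bool.and_eq_true] at hok
        obtain ⟨ga, ka0, ka1, la0, la1⟩ := ihX a ha hok.1.1
        obtain ⟨gb, kb0, kb1, lb0, lb1⟩ := ihY b hb hok.1.2
        obtain ⟨gc, kc0, kc1, lc0, lc1⟩ := ihX c hc hok.2
        have e0 : (D.t2 a b c).tr0 = node (node a.tr0 b.tr0) c.tr0 := rfl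
        have e1 : (D.t2 a b c).tr1 = node a.tr1 (node b.tr1 c.tr1) := rfl
        have f0 : (node a.tr0 b.tr0 : BTree).ht = 1 + a.tr0.ht := ht_node_left (by omega)
        have f1 : (node b.tr1 c.tr1 : BTree).ht = 1 + c.tr1.ht := ht_node_right (by omega)
        refine ⟨Good.rot ga gb gc (by omega) (Or.inr (by omega)), ?_, ?_, ?_, ?_⟩
        · rw [e0, ht_node_left (by rw [f0]; omega), f0]; omega
        · rw [e1, ht_node_right (by rw [f1]; omega), f1]; omega
        · rw [e0]
          show a.tr0.leaves + b.tr0.leaves + c.tr0.leaves = a.cnt + b.cnt + c.cnt; omega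
        · rw [e1]
          show a.tr1.leaves + (b.tr1.leaves + c.tr1.leaves) = a.cnt + b.cnt + c.cnt; omega
-- PART 8: surjectivity

theorem lev_surj : ∀ {T0 T1 : BTree}, Good T0 T1 →
    ∃ d, d ∈ LX T0.ht ∧ d.ok = true ∧ d.tr0 = T0 ∧ d.tr1 = T1 := by
  intro T0 T1 g
  induction g with
  | leaf =>
    refine ⟨D.xb, ?_, rfl, rfl, rfl⟩
    rw [show (leaf : BTree).ht = 0 from rfl, LX_zero]
    exact Finset.mem_singleton_self _
  | node gl gr himb ihl ihr =>
    rename_i l0 r0 l1 r1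
    obtain ⟨dl, ml, okl, el0, el1⟩ := ihl
    obtain ⟨dr, mr, okr, er0, er1⟩ := ihr
    rcases himb with h | h | h
    · have hht : (node l0 r0).ht = l0.ht + 1 := by rw [ht_node_left (by omega)]; omega
      refine ⟨D.nl dl (D.up dr), ?_, ?_, ?_, ?_⟩
      · rw [hht, mem_LX_succ]
        refine Or.inr (Or.inl ⟨dl, D.up dr, ml, ?_, rfl⟩)
        rw [show l0.ht = r0.ht + 1 by omega, mem_LY_succ]
        exact ⟨dr, mr, rfl⟩
      · show (dl.ok && dr.ok) = true; rw [okl, okr]; rfl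
      · show node dl.tr0 dr.tr0 = node l0 r0; rw [el0, er0]
      · show node dl.tr1 dr.tr1 = node l1 r1; rw [el1, er1]
    · have hh : r0.ht = l0.ht := by omega
      have hht : (node l0 r0).ht = l0.ht + 1 := by rw [ht_node_left (by omega)]; omega
      refine ⟨D.n2 dl dr, ?_, ?_, ?_, ?_⟩
      · rw [hht, mem_LX_succ]
        exact Or.inl ⟨dl, dr, ml, by rw [← hh]; exact mr, rfl⟩
      · show (dl.ok && dr.ok) = true; rw [okl, okr]; rfl
      · show node dl.tr0 dr.tr0 = node l0 r0; rw [el0, er0]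
      · show node dl.tr1 dr.tr1 = node l1 r1; rw [el1, er1]
    · have hht : (node l0 r0).ht = r0.ht + 1 := by rw [ht_node_right (by omega)]; omega
      refine ⟨D.nr (D.up dl) dr, ?_, ?_, ?_, ?_⟩
      · rw [hht, mem_LX_succ]
        refine Or.inr (Or.inr (Or.inl ⟨D.up dl, dr, ?_, mr, rfl⟩))
        rw [show r0.ht = l0.ht + 1 by omega, mem_LY_succ]
        exact ⟨dl, ml, rfl⟩
      · show (dl.ok && dr.ok) = true; rw [okl, okr]; rfl
      · show node dl.tr0 dr.tr0 = node l0 r0; rw [el0, er0]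
      · show node dl.tr1 dr.tr1 = node l1 r1; rw [el1, er1]
  | rot ga gb gc hac hb iha ihb ihc =>
    rename_i a0 b0 c0 a1 b1 c1
    obtain ⟨da, ma, oka, ea0, ea1⟩ := iha
    obtain ⟨db, mb, okb, eb0, eb1⟩ := ihb
    obtain ⟨dc, mc, okc, ec0, ec1⟩ := ihc
    have hb' : b0.ht ≤ a0.ht := by omega
    have f0 : (node a0 b0 : BTree).ht = 1 + a0.ht := ht_node_left hb'
    have hht : (node (node a0 b0) c0).ht = (a0.ht + 1) + 1 := by
      rw [ht_node_left (by rw [f0]; omega), f0]; omega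
    rcases hb with h | h
    · refine ⟨D.zn (D.t3 da db dc), ?_, ?_, ?_, ?_⟩
      · rw [hht, mem_LX_succ]
        refine Or.inr (Or.inr (Or.inr ⟨D.t3 da db dc, ?_, rfl⟩))
        rw [mem_LZ_succ]
        exact Or.inl ⟨da, db, dc, ma, by rw [← h]; exact mb, by rw [hac]; exact mc, rfl⟩
      · show (da.ok && db.ok && dc.ok) = true; rw [oka, okb, okc]; rfl
      · show node (node da.tr0 db.tr0) dc.tr0 = _; rw [ea0, eb0, ec0]
      · show node da.tr1 (node db.tr1 dc.tr1) = _; rw [ea1, eb1, ec1]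
    · refine ⟨D.zn (D.t2 da (D.up db) dc), ?_, ?_, ?_, ?_⟩
      · rw [hht, mem_LX_succ]
        refine Or.inr (Or.inr (Or.inr ⟨D.t2 da (D.up db) dc, ?_, rfl⟩))
        rw [mem_LZ_succ]
        refine Or.inr ⟨da, D.up db, dc, ma, ?_, by rw [hac]; exact mc, rfl⟩
        rw [show a0.ht = b0.ht + 1 by omega, mem_LY_succ]
        exact ⟨db, mb, rfl⟩
      · show (da.ok && db.ok && dc.ok) = true; rw [oka, okb, okc]; rfl
      · show node (node da.tr0 db.tr0) dc.tr0 = _; rw [ea0, eb0, ec0]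
      · show node da.tr1 (node db.tr1 dc.tr1) = _; rw [ea1, eb1, ec1]
-- PART 9: injectivity

theorem ok2 {a b : D} {f : D → D → D}
    (hf : (f a b).ok = (a.ok && b.ok)) (h : (f a b).ok = true) :
    a.ok = true ∧ b.ok = true := by
  rw [hf, Bool.and_eq_true] at h; exact h

theorem ok3 {a b c : D} {f : D → D → D → D}
    (hf : (f a b c).ok = (a.ok && b.ok && c.ok)) (h : (f a b c).ok = true) :
    a.ok = true ∧ b.ok = true ∧ c.ok = true := by
  rw [hf, Bool.and_eq_true, Bool.and_eq_true] at h
  exact ⟨h.1.1, h.1.2, h.2⟩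

theorem zn_shape {k : ℕ} {z : D} (hz : z ∈ LZ k) (hok : z.ok = true) :
    ∃ j, k = j + 1 ∧ ∃ A B C A' B' C' : BTree,
      z.tr0 = node (node A B) C ∧ z.tr1 = node A' (node B' C') ∧
      A.ht = j ∧ A'.ht = j ∧ (node A B : BTree).ht = j + 1 := by
  cases k with
  | zero =>
    rw [LZ_zero, Finset.mem_singleton] at hz
    subst hz
    exact absurd hok (by simp [D.ok])
  | succ j =>
    obtain ⟨sX, sY, sZ⟩ := lev_spec j
    rcases mem_LZ_succ.mp hz with ⟨a, b, c, ha, hb, hc, rfl⟩ | ⟨a, b, c, ha, hb, hc, rfl⟩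
    · obtain ⟨oka, okb, okc⟩ := ok3 (f := D.t3) rfl hok
      obtain ⟨_, ka0, ka1, _, _⟩ := sX a ha oka
      obtain ⟨_, kb0, kb1, _, _⟩ := sX b hb okb
      refine ⟨j, rfl, a.tr0, b.tr0, c.tr0, a.tr1, b.tr1, c.tr1, rfl, rfl, ka0, ka1, ?_⟩
      rw [ht_node_left (by omega)]; omega
    · obtain ⟨oka, okb, okc⟩ := ok3 (f := D.t2) rfl hok
      obtain ⟨_, ka0, ka1, _, _⟩ := sX a ha oka
      obtain ⟨_, kb0, kb1, _, _⟩ := sY b hb okb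
      refine ⟨j, rfl, a.tr0, b.tr0, c.tr0, a.tr1, b.tr1, c.tr1, rfl, rfl, ka0, ka1, ?_⟩
      rw [ht_node_left (by omega)]; omega

theorem lev_inj : ∀ k : ℕ,
    (∀ d ∈ LX k, ∀ d' ∈ LX k, d.ok = true → d'.ok = true →
      d.tr0 = d'.tr0 → d.tr1 = d'.tr1 → d = d') ∧
    (∀ d ∈ LY k, ∀ d' ∈ LY k, d.ok = true → d'.ok = true →
      d.tr0 = d'.tr0 → d.tr1 = d'.tr1 → d = d') ∧
    (∀ d ∈ LZ k, ∀ d' ∈ LZ k, d.ok = true → d'.ok = true →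
      d.tr0 = d'.tr0 → d.tr1 = d'.tr1 → d = d') := by
  intro k
  induction k with
  | zero =>
    refine ⟨?_, ?_, ?_⟩
    · intro d hd d' hd' _ _ _ _
      rw [LX_zero, Finset.mem_singleton] at hd hd'; rw [hd, hd']
    · intro d hd d' hd' _ _ _ _
      rw [LY_zero, Finset.mem_singleton] at hd hd'; rw [hd, hd']
    · intro d hd d' hd' _ _ _ _
      rw [LZ_zero, Finset.mem_singleton] at hd hd'; rw [hd, hd']
  | succ k ih =>
    obtain ⟨ihX, ihY, ihZ⟩ := ih
    obtain ⟨sX, sY, sZ⟩ := lev_spec k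
    refine ⟨?_, ?_, ?_⟩
    · intro d hd d' hd' hok hok' h0 h1
      rcases mem_LX_succ.mp hd with ⟨a, b, ha, hb, rfl⟩ | ⟨a, b, ha, hb, rfl⟩ |
        ⟨a, b, ha, hb, rfl⟩ | ⟨z, hz, rfl⟩
      -- d = n2 a b
      · obtain ⟨oka, okb⟩ := ok2 (f := D.n2) rfl hok
        rcases mem_LX_succ.mp hd' with ⟨a', b', ha', hb', rfl⟩ | ⟨a', b', ha', hb', rfl⟩ |
          ⟨a', b', ha', hb', rfl⟩ | ⟨z', hz', rfl⟩
        · obtain ⟨oka', okb'⟩ := ok2 (f := D.n2) rfl hok'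
          simp only [D.tr0, D.tr1] at h0 h1
          injection h0 with p1 p2
          injection h1 with q1 q2
          rw [ihX a ha a' ha' oka oka' p1 q1, ihX b hb b' hb' okb okb' p2 q2]
        · exfalso
          obtain ⟨oka', okb'⟩ := ok2 (f := D.nl) rfl hok'
          simp only [D.tr0, D.tr1] at h0 h1
          injection h0 with p1 p2
          obtain ⟨_, e, _, _, _⟩ := sX b hb okb
          obtain ⟨_, e', _, _, _⟩ := sY b' hb' okb'
          rw [p2] at e; omega
        · exfalso
          obtain ⟨oka', okb'⟩ := ok2 (f := D.nr) rfl hok'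
          simp only [D.tr0, D.tr1] at h0 h1
          injection h0 with p1 p2
          obtain ⟨_, e, _, _, _⟩ := sX a ha oka
          obtain ⟨_, e', _, _, _⟩ := sY a' ha' oka'
          rw [p1] at e; omega
        · exfalso
          obtain ⟨j, hkj, A, B, C, A', B', C', s0, s1, hA, hA', hAB⟩ := zn_shape hz' hok'
          simp only [D.tr0, D.tr1] at h0 h1
          rw [s1] at h1
          injection h1 with q1 q2
          obtain ⟨_, _, e, _, _⟩ := sX a ha oka
          rw [q1] at e; omega
      -- d = nl a b
      · obtain ⟨oka, okb⟩ := ok2 (f := D.nl) rfl hok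
        rcases mem_LX_succ.mp hd' with ⟨a', b', ha', hb', rfl⟩ | ⟨a', b', ha', hb', rfl⟩ |
          ⟨a', b', ha', hb', rfl⟩ | ⟨z', hz', rfl⟩
        · exfalso
          obtain ⟨oka', okb'⟩ := ok2 (f := D.n2) rfl hok'
          simp only [D.tr0, D.tr1] at h0 h1
          injection h0 with p1 p2
          obtain ⟨_, e, _, _, _⟩ := sY b hb okb
          obtain ⟨_, e', _, _, _⟩ := sX b' hb' okb'
          rw [p2] at e; omega
        · obtain ⟨oka', okb'⟩ := ok2 (f := D.nl) rfl hok'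
          simp only [D.tr0, D.tr1] at h0 h1
          injection h0 with p1 p2
          injection h1 with q1 q2
          rw [ihX a ha a' ha' oka oka' p1 q1, ihY b hb b' hb' okb okb' p2 q2]
        · exfalso
          obtain ⟨oka', okb'⟩ := ok2 (f := D.nr) rfl hok'
          simp only [D.tr0, D.tr1] at h0 h1
          injection h0 with p1 p2
          obtain ⟨_, e, _, _, _⟩ := sX a ha oka
          obtain ⟨_, e', _, _, _⟩ := sY a' ha' oka'
          rw [p1] at e; omega
        · exfalso
          obtain ⟨j, hkj, A, B, C, A', B', C', s0, s1, hA, hA', hAB⟩ := zn_shape hz' hok'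
          simp only [D.tr0, D.tr1] at h0 h1
          rw [s1] at h1
          injection h1 with q1 q2
          obtain ⟨_, _, e, _, _⟩ := sX a ha oka
          rw [q1] at e; omega
      -- d = nr a b  (a is the y-part)
      · obtain ⟨oka, okb⟩ := ok2 (f := D.nr) rfl hok
        rcases mem_LX_succ.mp hd' with ⟨a', b', ha', hb', rfl⟩ | ⟨a', b', ha', hb', rfl⟩ |
          ⟨a', b', ha', hb', rfl⟩ | ⟨z', hz', rfl⟩
        · exfalso
          obtain ⟨oka', okb'⟩ := ok2 (f := D.n2) rfl hok'
          simp only [D.tr0, D.tr1] at h0 h1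
          injection h0 with p1 p2
          obtain ⟨_, e, _, _, _⟩ := sY a ha oka
          obtain ⟨_, e', _, _, _⟩ := sX a' ha' oka'
          rw [p1] at e; omega
        · exfalso
          obtain ⟨oka', okb'⟩ := ok2 (f := D.nl) rfl hok'
          simp only [D.tr0, D.tr1] at h0 h1
          injection h0 with p1 p2
          obtain ⟨_, e, _, _, _⟩ := sY a ha oka
          obtain ⟨_, e', _, _, _⟩ := sX a' ha' oka'
          rw [p1] at e; omega
        · obtain ⟨oka', okb'⟩ := ok2 (f := D.nr) rfl hok'
          simp only [D.tr0, D.tr1] at h0 h1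
          injection h0 with p1 p2
          injection h1 with q1 q2
          rw [ihY a ha a' ha' oka oka' p1 q1, ihX b hb b' hb' okb okb' p2 q2]
        · exfalso
          obtain ⟨j, hkj, A, B, C, A', B', C', s0, s1, hA, hA', hAB⟩ := zn_shape hz' hok'
          simp only [D.tr0, D.tr1] at h0 h1
          rw [s0] at h0
          injection h0 with p1 p2
          obtain ⟨_, e, _, _, _⟩ := sY a ha oka
          rw [p1] at e
          omega
      -- d = zn z
      · rcases mem_LX_succ.mp hd' with ⟨a', b', ha', hb', rfl⟩ | ⟨a', b', ha', hb', rfl⟩ |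
          ⟨a', b', ha', hb', rfl⟩ | ⟨z', hz', rfl⟩
        · exfalso
          obtain ⟨oka', okb'⟩ := ok2 (f := D.n2) rfl hok'
          obtain ⟨j, hkj, A, B, C, A', B', C', s0, s1, hA, hA', hAB⟩ := zn_shape hz hok
          simp only [D.tr0, D.tr1] at h0 h1
          rw [s1] at h1
          injection h1 with q1 q2
          obtain ⟨_, _, e, _, _⟩ := sX a' ha' oka'
          rw [← q1] at e; omega
        · exfalso
          obtain ⟨oka', okb'⟩ := ok2 (f := D.nl) rfl hok'
          obtain ⟨j, hkj, A, B, C, A', B', C', s0, s1, hA, hA', hAB⟩ := zn_shape hz hok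
          simp only [D.tr0, D.tr1] at h0 h1
          rw [s1] at h1
          injection h1 with q1 q2
          obtain ⟨_, _, e, _, _⟩ := sX a' ha' oka'
          rw [← q1] at e; omega
        · exfalso
          obtain ⟨oka', okb'⟩ := ok2 (f := D.nr) rfl hok'
          obtain ⟨j, hkj, A, B, C, A', B', C', s0, s1, hA, hA', hAB⟩ := zn_shape hz hok
          simp only [D.tr0, D.tr1] at h0 h1
          rw [s0] at h0
          injection h0 with p1 p2
          obtain ⟨_, e, _, _, _⟩ := sY a' ha' oka'
          rw [← p1] at e
          omega
        · simp only [D.tr0, D.tr1] at h0 h1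
          rw [ihZ z hz z' hz' hok hok' h0 h1]
    · intro d hd d' hd' hok hok' h0 h1
      obtain ⟨a, ha, rfl⟩ := mem_LY_succ.mp hd
      obtain ⟨a', ha', rfl⟩ := mem_LY_succ.mp hd'
      simp only [D.tr0, D.tr1] at h0 h1
      rw [ihX a ha a' ha' hok hok' h0 h1]
    · intro d hd d' hd' hok hok' h0 h1
      rcases mem_LZ_succ.mp hd with ⟨a, b, c, ha, hb, hc, rfl⟩ | ⟨a, b, c, ha, hb, hc, rfl⟩
      · obtain ⟨oka, okb, okc⟩ := ok3 (f := D.t3) rfl hok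
        rcases mem_LZ_succ.mp hd' with ⟨a', b', c', ha', hb', hc', rfl⟩ |
          ⟨a', b', c', ha', hb', hc', rfl⟩
        · obtain ⟨oka', okb', okc'⟩ := ok3 (f := D.t3) rfl hok'
          simp only [D.tr0, D.tr1] at h0 h1
          injection h0 with p1 p2
          injection p1 with p3 p4
          injection h1 with q1 q2
          injection q2 with q3 q4
          rw [ihX a ha a' ha' oka oka' p3 q1, ihX b hb b' hb' okb okb' p4 q3,
            ihX c hc c' hc' okc okc' p2 q4]
        · exfalso
          obtain ⟨oka', okb', okc'⟩ := ok3 (f := D.t2) rfl hok'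
          simp only [D.tr0, D.tr1] at h0 h1
          injection h0 with p1 p2
          injection p1 with p3 p4
          obtain ⟨_, e, _, _, _⟩ := sX b hb okb
          obtain ⟨_, e', _, _, _⟩ := sY b' hb' okb'
          rw [p4] at e; omega
      · obtain ⟨oka, okb, okc⟩ := ok3 (f := D.t2) rfl hok
        rcases mem_LZ_succ.mp hd' with ⟨a', b', c', ha', hb', hc', rfl⟩ |
          ⟨a', b', c', ha', hb', hc', rfl⟩
        · exfalso
          obtain ⟨oka', okb', okc'⟩ := ok3 (f := D.t3) rfl hok'
          simp only [D.tr0, D.tr1] at h0 h1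
          injection h0 with p1 p2
          injection p1 with p3 p4
          obtain ⟨_, e, _, _, _⟩ := sY b hb okb
          obtain ⟨_, e', _, _, _⟩ := sX b' hb' okb'
          rw [p4] at e; omega
        · obtain ⟨oka', okb', okc'⟩ := ok3 (f := D.t2) rfl hok'
          simp only [D.tr0, D.tr1] at h0 h1
          injection h0 with p1 p2
          injection p1 with p3 p4
          injection h1 with q1 q2
          injection q2 with q3 q4
          rw [ihX a ha a' ha' oka oka' p3 q1, ihY b hb b' hb' okb okb' p4 q3,
            ihX c hc c' hc' okc okc' p2 q4]
-- PART 10: final assembly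

noncomputable def e0 : Fin 3 → MvPolynomial ℕ ℕ := ![X 0, 0, 0]

theorem bind_e0_w (d : D) : bind₁ e0 d.w = if d.ok then X 0 ^ d.cnt else 0 := by
  induction d with
  | xb =>
    rw [show D.xb.w = X 0 from rfl, bind₁_X_right]
    show e0 0 = _
    simp [e0, D.ok, D.cnt]
  | yb =>
    rw [show D.yb.w = X 1 from rfl, bind₁_X_right]
    show e0 1 = _
    simp [e0, D.ok]
  | zb =>
    rw [show D.zb.w = X 2 from rfl, bind₁_X_right]
    show e0 2 = _
    simp [e0, D.ok]
  | n2 a b iha ihb =>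
    rw [show (D.n2 a b).w = a.w * b.w from rfl, map_mul, iha, ihb]
    by_cases ha : a.ok = true <;> by_cases hb : b.ok = true <;>
      simp [D.ok, D.cnt, ha, hb, pow_add]
  | nl a b iha ihb =>
    rw [show (D.nl a b).w = a.w * b.w from rfl, map_mul, iha, ihb]
    by_cases ha : a.ok = true <;> by_cases hb : b.ok = true <;>
      simp [D.ok, D.cnt, ha, hb, pow_add]
  | nr a b iha ihb =>
    rw [show (D.nr a b).w = a.w * b.w from rfl, map_mul, iha, ihb]
    by_cases ha : a.ok = true <;> by_cases hb : b.ok = true <;>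
      simp [D.ok, D.cnt, ha, hb, pow_add]
  | zn a ih =>
    rw [show (D.zn a).w = a.w from rfl, ih]
    rfl
  | up a ih =>
    rw [show (D.up a).w = a.w from rfl, ih]
    rfl
  | t3 a b c iha ihb ihc =>
    rw [show (D.t3 a b c).w = a.w * b.w * c.w from rfl, map_mul, map_mul, iha, ihb, ihc]
    by_cases ha : a.ok = true <;> by_cases hb : b.ok = true <;> by_cases hc : c.ok = true <;>
      simp [D.ok, D.cnt, ha, hb, hc, pow_add]
  | t2 a b c iha ihb ihc =>
    rw [show (D.t2 a b c).w = a.w * b.w * c.w from rfl, map_mul, map_mul, iha, ihb, ihc]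
    by_cases ha : a.ok = true <;> by_cases hb : b.ok = true <;> by_cases hc : c.ok = true <;>
      simp [D.ok, D.cnt, ha, hb, hc, pow_add]

theorem coeff_single_bind (n : ℕ) (d : D) :
    coeff (Finsupp.single 0 n) (bind₁ e0 d.w) =
      if d.ok = true ∧ d.cnt = n then 1 else 0 := by
  rw [bind_e0_w]
  by_cases h : d.ok = true
  · rw [if_pos h, coeff_X_pow]
    by_cases h2 : d.cnt = n
    · rw [if_pos (by rw [h2]), if_pos ⟨h, h2⟩]
    · rw [if_neg (fun hc => h2 (Finsupp.single_injective 0 hc)),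
        if_neg (fun hc => h2 hc.2)]
  · rw [if_neg h, if_neg (fun hc => h hc.1), coeff_zero]

theorem filter_empty_of_ge {n k : ℕ} (hk : n ≤ k) :
    (LX k).filter (fun d => d.ok = true ∧ d.cnt = n) = ∅ := by
  rw [Finset.filter_eq_empty_iff]
  rintro d hd ⟨hok, hcnt⟩
  obtain ⟨_, k0, _, l0, _⟩ := (lev_spec k).1 d hd hok
  have := ht_lt_leaves d.tr0
  omega

theorem main_count (n : ℕ) (hn : 1 ≤ n) (i : ℕ) (hi : n ≤ i) :
    coeff (Finsupp.single 0 n) (bind₁ ![X 0, 0, 0] (intSeq i)) =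
      Nat.card {P : BTree × BTree //
        Balanced P.1 ∧ Balanced P.2 ∧
        P.1.leaves = n ∧ P.2.leaves = n ∧ Tamari P.1 P.2} := by
  classical
  show coeff (Finsupp.single 0 n) (bind₁ e0 (intSeq i)) =
      Nat.card {P : BTree × BTree //
        Balanced P.1 ∧ Balanced P.2 ∧
        P.1.leaves = n ∧ P.2.leaves = n ∧ Tamari P.1 P.2}
  have key : bind₁ e0 (intSeq i) =
      ∑ k ∈ Finset.range (i + 1), ∑ d ∈ LX k, bind₁ e0 d.w := by
    rw [intSeq_eq, map_sum]
    exact Finset.sum_congr rfl fun k _ => by rw [WS, map_sum]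
  rw [key, coeff_sum]
  rw [Finset.sum_congr rfl fun k _ => coeff_sum _ _ _]
  rw [Finset.sum_congr rfl fun k _ =>
    Finset.sum_congr rfl fun d _ => coeff_single_bind n d]
  rw [Finset.sum_congr rfl fun k _ =>
    Finset.sum_boole (fun d => d.ok = true ∧ d.cnt = n) (LX k)]
  simp only [Nat.cast_id]
  set p : D → Prop := fun d => d.ok = true ∧ d.cnt = n with hp
  set F : ℕ → Finset D := fun k => (LX k).filter p with hF
  have step1 : ∑ k ∈ Finset.range (i + 1), (F k).card = ∑ k ∈ Finset.range n, (F k).card := by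
    refine (Finset.sum_subset (Finset.range_subset_range.mpr (by omega)) ?_).symm
    intro k _ hk
    rw [Finset.mem_range, not_lt] at hk
    rw [hF]
    simp only []
    rw [filter_empty_of_ge hk, Finset.card_empty]
  have hdisj : ∀ k ∈ Finset.range n, ∀ k' ∈ Finset.range n, k ≠ k' →
      Disjoint (F k) (F k') := by
    intro k _ k' _ hne
    rw [Finset.disjoint_left]
    intro d hd hd'
    rw [hF] at hd hd'
    simp only [Finset.mem_filter] at hd hd'
    obtain ⟨_, e1, _, _, _⟩ := (lev_spec k).1 d hd.1 hd.2.1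
    obtain ⟨_, e2, _, _, _⟩ := (lev_spec k').1 d hd'.1 hd'.2.1
    omega
  have step2 : ∑ k ∈ Finset.range n, (F k).card =
      ((Finset.range n).biUnion F).card := (Finset.card_biUnion hdisj).symm
  have hinj : Set.InjOn (fun d : D => (d.tr0, d.tr1))
      ((Finset.range n).biUnion F : Finset D) := by
    intro d hd d' hd' hpair
    simp only [Finset.coe_biUnion, Set.mem_iUnion, Finset.mem_coe, Finset.mem_biUnion] at hd hd'
    obtain ⟨k, _, hdk⟩ := hd
    obtain ⟨k', _, hdk'⟩ := hd'
    rw [hF] at hdk hdk'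
    simp only [Finset.mem_filter] at hdk hdk'
    have e0' : d.tr0 = d'.tr0 := congrArg Prod.fst hpair
    have e1' : d.tr1 = d'.tr1 := congrArg Prod.snd hpair
    obtain ⟨_, f1, _, _, _⟩ := (lev_spec k).1 d hdk.1 hdk.2.1
    obtain ⟨_, f2, _, _, _⟩ := (lev_spec k').1 d' hdk'.1 hdk'.2.1
    have : k = k' := by rw [← f1, ← f2, e0']
    subst this
    exact (lev_inj k).1 d hdk.1 d' hdk'.1 hdk.2.1 hdk'.2.1 e0' e1'
  set B : Finset (BTree × BTree) :=
    ((Finset.range n).biUnion F).image (fun d => (d.tr0, d.tr1)) with hB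
  have step3 : ((Finset.range n).biUnion F).card = B.card :=
    (Finset.card_image_of_injOn hinj).symm
  have memiff : ∀ P : BTree × BTree,
      (Balanced P.1 ∧ Balanced P.2 ∧ P.1.leaves = n ∧ P.2.leaves = n ∧ Tamari P.1 P.2) ↔
        P ∈ B := by
    intro P
    constructor
    · rintro ⟨hb1, hb2, hl1, hl2, ht12⟩
      have g : Good P.1 P.2 := good_iff.mpr ⟨hb1, hb2, ht12⟩
      obtain ⟨d, hd, hok, e1, e2⟩ := lev_surj g
      obtain ⟨_, _, _, l0, _⟩ := (lev_spec P.1.ht).1 d hd hok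
      rw [hB]
      rw [Finset.mem_image]
      refine ⟨d, ?_, by rw [e1, e2]⟩
      rw [Finset.mem_biUnion]
      refine ⟨P.1.ht, ?_, ?_⟩
      · rw [Finset.mem_range]
        have := ht_lt_leaves P.1
        omega
      · rw [hF]
        simp only [Finset.mem_filter]
        exact ⟨hd, hok, by rw [← l0, e1, hl1]⟩
    · intro hPB
      rw [hB, Finset.mem_image] at hPB
      obtain ⟨d, hd, he⟩ := hPB
      rw [Finset.mem_biUnion] at hd
      obtain ⟨k, _, hdk⟩ := hd
      rw [hF] at hdk
      simp only [Finset.mem_filter] at hdk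
      obtain ⟨g, _, _, l0, l1⟩ := (lev_spec k).1 d hdk.1 hdk.2.1
      have hb := g.balanced
      have httam := g.tamari
      rw [← he]
      exact ⟨hb.1, hb.2, by rw [l0]; exact hdk.2.2, by rw [l1]; exact hdk.2.2, httam⟩
  have final : Nat.card {P : BTree × BTree //
      Balanced P.1 ∧ Balanced P.2 ∧ P.1.leaves = n ∧ P.2.leaves = n ∧ Tamari P.1 P.2} =
      B.card := by
    rw [Nat.card_congr (Equiv.subtypeEquivRight memiff)]
    exact Nat.card_eq_finsetCard B
  rw [step1, step2, step3, final]

theorem intSeq_coeff_eventually_counts_intervals' (n : ℕ) (hn : 1 ≤ n) :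
    ∃ N : ℕ, ∀ i ≥ N,
      coeff (Finsupp.single 0 n) (bind₁ ![X 0, 0, 0] (intSeq i)) =
        Nat.card {P : BTree × BTree //
          Balanced P.1 ∧ Balanced P.2 ∧
          P.1.leaves = n ∧ P.2.leaves = n ∧ Tamari P.1 P.2} :=
  ⟨n, fun i hi => main_count n hn i hi⟩

open MvPolynomial in
/-- For every `n ≥ 1`, the coefficient of `x^n` in `A_i(x, 0, 0)` is eventually
constant as `i → ∞`, and its eventual value is the number of balanced tree
intervals `[T0, T1]` of the Tamari lattice with `n` leaves, i.e. the number of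
pairs `(T0, T1)` of balanced trees with `n` leaves such that `T0 ≼ T1`. -/
theorem intSeq_coeff_eventually_counts_intervals (n : ℕ) (hn : 1 ≤ n) :
    ∃ N : ℕ, ∀ i ≥ N,
      coeff (Finsupp.single 0 n) (bind₁ ![X 0, 0, 0] (intSeq i)) =
        Nat.card {P : BTree × BTree //
          Balanced P.1 ∧ Balanced P.2 ∧
          P.1.leaves = n ∧ P.2.leaves = n ∧ Tamari P.1 P.2} := by
  exact ⟨n, fun i hi => main_count n hn i hi⟩

end BTree
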